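/- Let G be a graph and let G' be obtained from G by attaching r ≥ 5 pendant vertices to each vertex of G and subdividing each edge of G with two new vertices. If v ∈ V(G) and f is a 4RDF of G' with f(v) ≤ 4, then f must assign label 5 to v or positive labels to all r pendant leaves of v, so that the total label on N[v] ∩ ({v} ∪ leaves(v)) is at least 5; consequently every 4RDF of G' has weight at least 5|V(G)|. -/

import Mathlib

open scoped Classical
open Finset

/-- A quadruple Roman dominating function: labels in {0,…,5}, and every vertex with
label at most 3 satisfies the quadruple Roman condition. -/
def Is4RDF {V : Type*} [Fintype V] (G : SimpleGraph V) (f : V → ℕ) : Prop :=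
  (∀ v, f v ≤ 5) ∧
  ∀ x, f x ≤ 3 →
    f x + ∑ v ∈ G.neighborFinset x, f v ≥
      ((G.neighborFinset x).filter fun y => f y ≠ 0).card + 4

/-- The weight of a labelling. -/
def rdfWeight {V : Type*} [Fintype V] (f : V → ℕ) : ℕ := ∑ v, f v

/-- The quadruple Roman domination number. -/
noncomputable def gamma4R {V : Type*} [Fintype V] (G : SimpleGraph V) : ℕ :=
  sInf {w | ∃ f, Is4RDF G f ∧ rdfWeight f = w}

/-- A dominating set. -/
def IsDomSet {V : Type*} [Fintype V] (G : SimpleGraph V) (D : Finset V) : Prop :=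
  ∀ v, v ∉ D → ∃ u ∈ D, G.Adj u v

/-- The domination number. -/
noncomputable def gammaDom {V : Type*} [Fintype V] (G : SimpleGraph V) : ℕ :=
  sInf {n | ∃ D : Finset V, IsDomSet G D ∧ D.card = n}

/-- An efficient dominating set: every vertex lies in exactly one closed
neighborhood of a vertex of `D`. -/
def IsEfficientDomSet {V : Type*} [Fintype V] (G : SimpleGraph V) (D : Finset V) : Prop :=
  ∀ v : V, ∃! u, u ∈ D ∧ (u = v ∨ G.Adj u v)

/-- The graph obtained from `G` by attaching `r` pendant leaves to each vertex and
subdividing each edge with two new vertices: vertex `Sum.inl v` is an original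
vertex, `Sum.inr (Sum.inl (v, j))` is the `j`-th leaf at `v`, and for each
adjacent pair `e = (u, w)` the vertex `Sum.inr (Sum.inr e)` is the subdivision
vertex next to `u` on the edge `uw`. -/
def subdivPendant {V : Type*} (G : SimpleGraph V) (r : ℕ) :
    SimpleGraph (V ⊕ ((V × Fin r) ⊕ {e : V × V // G.Adj e.1 e.2})) where
  Adj a b :=
    match a, b with
    | Sum.inl u, Sum.inr (Sum.inl (v, _)) => u = v
    | Sum.inr (Sum.inl (v, _)), Sum.inl u => u = v
    | Sum.inl u, Sum.inr (Sum.inr e) => u = e.val.1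
    | Sum.inr (Sum.inr e), Sum.inl u => u = e.val.1
    | Sum.inr (Sum.inr e), Sum.inr (Sum.inr e') =>
        e.val.1 = e'.val.2 ∧ e.val.2 = e'.val.1
    | _, _ => False
  symm := by
    constructor
    rintro (u | ⟨v, j⟩ | e) (u' | ⟨v', j'⟩ | e') h
    · exact h.elim
    · exact h
    · exact h
    · exact h
    · exact h.elim
    · exact h.elim
    · exact h
    · exact h.elim
    · exact ⟨h.2.symm, h.1.symm⟩
  loopless := by
    constructor
    rintro (u | ⟨v, j⟩ | e) h
    · exact h
    · exact h
    · have he := e.prop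
      rw [h.1] at he
      exact G.loopless.irrefl _ he

/-- In `G'` (obtained from `G` by attaching `r ≥ 5` leaves to each vertex and
subdividing each edge twice), any 4RDF `f` with `f(v) ≤ 4` on an original vertex `v`
must place a total label of at least 5 on `v` together with its leaves; consequently
every 4RDF of `G'` has weight at least `5·|V(G)|`. -/
theorem subdivPendant_4RDF_lower {V : Type*} [Fintype V] (G : SimpleGraph V)
    (r : ℕ) (hr : 5 ≤ r) (f : V ⊕ ((V × Fin r) ⊕ {e : V × V // G.Adj e.1 e.2}) → ℕ)
    (hf : Is4RDF (subdivPendant G r) f) :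
    (∀ v : V, f (Sum.inl v) ≤ 4 →
      5 ≤ f (Sum.inl v) + ∑ j : Fin r, f (Sum.inr (Sum.inl (v, j)))) ∧
    5 * Fintype.card V ≤ rdfWeight f := by

  have hleaf : ∀ (v : V) (j : Fin r),
      (subdivPendant G r).neighborFinset (Sum.inr (Sum.inl (v, j)))
        = {Sum.inl v} := by
    intro v j
    ext x
    rcases x with u | x | e
    · rw [SimpleGraph.mem_neighborFinset]; simp [subdivPendant, eq_comm]
    · rw [SimpleGraph.mem_neighborFinset]; simp [subdivPendant]
    · rw [SimpleGraph.mem_neighborFinset]; simp [subdivPendant]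
  have key : ∀ v : V, f (Sum.inl v) ≤ 4 →
      5 ≤ f (Sum.inl v) + ∑ j : Fin r, f (Sum.inr (Sum.inl (v, j))) := by
    intro v hv
    by_cases h : ∀ j : Fin r, f (Sum.inr (Sum.inl (v, j))) ≠ 0
    · have hsum : r ≤ ∑ j : Fin r, f (Sum.inr (Sum.inl (v, j))) := by
        calc r = ∑ _j : Fin r, 1 := by simp
        _ ≤ _ := Finset.sum_le_sum fun j _ => Nat.one_le_iff_ne_zero.2 (h j)
      omega
    · push_neg at h
      obtain ⟨j, hj⟩ := h
      have hcond := hf.2 (Sum.inr (Sum.inl (v, j))) (by omega)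
      rw [hleaf v j] at hcond
      rw [Finset.sum_singleton, Finset.filter_singleton] at hcond
      by_cases hz : f (Sum.inl v) = 0
      · simp [hz, hj] at hcond
      · simp [hz, hj] at hcond
        omega
  refine ⟨key, ?_⟩
  have hper : ∀ v : V,
      5 ≤ f (Sum.inl v) + ∑ j : Fin r, f (Sum.inr (Sum.inl (v, j))) := by
    intro v
    by_cases hv : f (Sum.inl v) ≤ 4
    · exact key v hv
    · exact le_trans (by omega) (Nat.le_add_right _ _)
  rw [rdfWeight, Fintype.sum_sum_type, Fintype.sum_sum_type, Fintype.sum_prod_type]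
  calc 5 * Fintype.card V = ∑ _v : V, 5 := by simp [mul_comm]
    _ ≤ ∑ v : V, (f (Sum.inl v) + ∑ j : Fin r, f (Sum.inr (Sum.inl (v, j)))) :=
        Finset.sum_le_sum fun v _ => hper v
    _ = (∑ v : V, f (Sum.inl v)) + ∑ v : V, ∑ j : Fin r, f (Sum.inr (Sum.inl (v, j))) :=
        Finset.sum_add_distrib
    _ ≤ _ := by omega
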